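/- arXiv:2107.14187 — 4 statements merged into one kernel-verified Lean document; each statement's English description precedes it below -/
import Mathlib

section
/- Let G be a countable amenable group acting almost freely and almost transitively by graph automorphisms on a countable, loopless, locally finite graph Γ, let U_0 be a fundamental domain of the action, and let λ: V(Γ) → ℝ_{>0} be a G-invariant activity function. Then for every Følner sequence {F_n} in G, lim_n (log Z_Γ(F_n U_0, λ))/|F_n| = inf_{F ∈ 𝓕(G)} (log Z_Γ(F U_0, λ))/|F|; in particular the limit exists. -/
/-!
STATEMENT 2:
Let `G` be a countable amenable group acting almost freely and almost
transitively by graph automorphisms on a countable, loopless, locally finite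
graph `Γ`, let `U₀` be a fundamental domain of the action, and let
`λ : V(Γ) → ℝ_{>0}` be a `G`-invariant activity function.  Then for every
Følner sequence `{Fₙ}` in `G`,
`limₙ (log Z_Γ(Fₙ U₀, λ))/|Fₙ| = inf_{F ∈ 𝓕(G)} (log Z_Γ(F U₀, λ))/|F|`;
in particular the limit exists.
-/

open scoped Classical symmDiff
open Filter

/-- The partition function `Z_Γ(U, λ)` of the hardcore model `(Γ, λ)` on the
finite set `U`: independent sets supported on `U` are identified with the
independent subsets `s ⊆ U`, with weight `∏_{v ∈ s} λ(v)`. -/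
noncomputable def hcZ {V : Type*} (Γ : SimpleGraph V) (lam : V → ℝ)
    (U : Finset V) : ℝ :=
  ∑ s ∈ U.powerset.filter (fun s => ∀ u ∈ s, ∀ w ∈ s, ¬ Γ.Adj u w),
    ∏ u ∈ s, lam u

/-- The translate `F • U₀ = {g • u : g ∈ F, u ∈ U₀}` as a finite set. -/
noncomputable def transl {G V : Type*} [Group G] [MulAction G V]
    (F : Finset G) (U₀ : Finset V) : Finset V :=
  (F ×ˢ U₀).image (fun p => p.1 • p.2)

/-- `{Fₙ}` is a (right) Følner sequence: finite nonempty sets with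
`|Fₙ g △ Fₙ|/|Fₙ| → 0` for every `g ∈ G`. -/
def IsFolnerSeq {G : Type*} [Group G] (F : ℕ → Finset G) : Prop :=
  (∀ n, (F n).Nonempty) ∧
    ∀ g : G, Tendsto
      (fun n => ((((F n).image (· * g)) ∆ (F n)).card : ℝ) / ((F n).card : ℝ))
      atTop (nhds 0)

/-- A finite set `U` is dynamically generating: `G • U = V`. -/
def Generating (G : Type*) {V : Type*} [Group G] [MulAction G V]
    (U : Finset V) : Prop :=
  ∀ v : V, ∃ g : G, ∃ u ∈ U, g • u = v

/-- A fundamental domain: a finite dynamically generating set that is minimal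
with this property. -/
def IsFundDom (G : Type*) {V : Type*} [Group G] [MulAction G V]
    (U : Finset V) : Prop :=
  Generating G U ∧ ∀ U' ⊆ U, Generating G U' → U' = U

section basic
variable {V : Type*} (Γ : SimpleGraph V) (lam : V → ℝ)

lemma hcZ_empty : hcZ Γ lam ∅ = 1 := by
  simp [hcZ, Finset.powerset_empty, Finset.filter_singleton]

lemma one_le_hcZ (hpos : ∀ v, 0 ≤ lam v) (U : Finset V) : 1 ≤ hcZ Γ lam U := by
  have hmem : (∅ : Finset V) ∈ U.powerset.filter
      (fun s => ∀ u ∈ s, ∀ w ∈ s, ¬ Γ.Adj u w) := by simp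
  have h := Finset.single_le_sum (f := fun s : Finset V => ∏ u ∈ s, lam u)
    (fun s _ => Finset.prod_nonneg fun u _ => hpos u) hmem
  simpa [hcZ] using h

lemma hcZ_pos (hpos : ∀ v, 0 ≤ lam v) (U : Finset V) : 0 < hcZ Γ lam U :=
  lt_of_lt_of_le one_pos (one_le_hcZ Γ lam hpos U)

lemma hcZ_mono (hpos : ∀ v, 0 ≤ lam v) {U U' : Finset V} (h : U ⊆ U') :
    hcZ Γ lam U ≤ hcZ Γ lam U' := by
  apply Finset.sum_le_sum_of_subset_of_nonneg
  · intro s hs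
    simp only [Finset.mem_filter, Finset.mem_powerset] at hs ⊢
    exact ⟨hs.1.trans h, hs.2⟩
  · exact fun s _ _ => Finset.prod_nonneg fun u _ => hpos u

lemma hcZ_del {U : Finset V} {v : V} (hv : v ∈ U) :
    hcZ Γ lam U = hcZ Γ lam (U.erase v)
      + lam v * hcZ Γ lam (U.filter (fun w => ¬ w = v ∧ ¬ Γ.Adj v w)) := by
  classical
  have h1 : ((U.powerset.filter (fun s => ∀ u ∈ s, ∀ w ∈ s, ¬ Γ.Adj u w)).filter
        (fun s => ¬ v ∈ s))
      = (U.erase v).powerset.filter (fun s => ∀ u ∈ s, ∀ w ∈ s, ¬ Γ.Adj u w) := by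
    ext s
    simp only [Finset.mem_filter, Finset.mem_powerset, Finset.subset_erase]
    tauto
  have h2 : ∑ s ∈ ((U.powerset.filter (fun s => ∀ u ∈ s, ∀ w ∈ s, ¬ Γ.Adj u w)).filter
        (fun s => v ∈ s)), ∏ u ∈ s, lam u
      = lam v * hcZ Γ lam (U.filter (fun w => ¬ w = v ∧ ¬ Γ.Adj v w)) := by
    rw [hcZ, Finset.mul_sum]
    refine Finset.sum_bij' (fun s _ => s.erase v) (fun t _ => insert v t) ?_ ?_ ?_ ?_ ?_
    · intro s hs
      simp only [Finset.mem_filter, Finset.mem_powerset] at hs ⊢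
      obtain ⟨⟨hsU, hind⟩, hvs⟩ := hs
      refine ⟨fun w hw => ?_, fun u hu w hw => hind u (Finset.mem_of_mem_erase hu) w
        (Finset.mem_of_mem_erase hw)⟩
      rw [Finset.mem_erase] at hw
      exact Finset.mem_filter.2 ⟨hsU hw.2, hw.1, hind v hvs w hw.2⟩
    · intro t ht
      simp only [Finset.mem_filter, Finset.mem_powerset] at ht ⊢
      obtain ⟨htU, hind⟩ := ht
      have htP : ∀ w ∈ t, w ∈ U ∧ ¬ w = v ∧ ¬ Γ.Adj v w := by
        intro w hw; simpa using (htU hw)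
      refine ⟨⟨?_, ?_⟩, Finset.mem_insert_self _ _⟩
      · intro w hw
        rcases Finset.mem_insert.1 hw with rfl | hw'
        · exact hv
        · exact (htP w hw').1
      · intro a ha b hb
        rcases Finset.mem_insert.1 ha with rfl | ha' <;>
          rcases Finset.mem_insert.1 hb with h'' | hb'
        · rw [h'']; exact Γ.loopless.irrefl _
        · exact (htP b hb').2.2
        · rw [h'']; intro hadj; exact (htP a ha').2.2 hadj.symm
        · exact hind a ha' b hb'
    · intro s hs
      simp only [Finset.mem_filter] at hs
      exact Finset.insert_erase hs.2
    · intro t ht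
      simp only [Finset.mem_filter, Finset.mem_powerset] at ht
      apply Finset.erase_insert
      intro hvt
      have := ht.1 hvt
      simp at this
    · intro s hs
      simp only [Finset.mem_filter] at hs
      exact (Finset.mul_prod_erase s lam hs.2).symm
  rw [hcZ, ← Finset.sum_filter_add_sum_filter_not
    (U.powerset.filter (fun s => ∀ u ∈ s, ∀ w ∈ s, ¬ Γ.Adj u w)) (fun s => v ∈ s)
    (fun s => ∏ u ∈ s, lam u), h2, h1, add_comm]
  rfl

end basic

-- geometric mean superadditivity
lemma gm_superadd {ι : Type*} (s : Finset ι) {m : ℕ} (hs : s.card = m) (hm : 0 < m)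
    (x y : ι → ℝ) (hx : ∀ i ∈ s, 0 < x i) (hy : ∀ i ∈ s, 0 < y i) :
    (∏ i ∈ s, x i) ^ ((m : ℝ)⁻¹) + (∏ i ∈ s, y i) ^ ((m : ℝ)⁻¹)
      ≤ (∏ i ∈ s, (x i + y i)) ^ ((m : ℝ)⁻¹) := by
  have hz : ∀ i ∈ s, 0 < x i + y i := fun i hi => add_pos (hx i hi) (hy i hi)
  have hw : ∀ i ∈ s, (0:ℝ) ≤ (m : ℝ)⁻¹ := fun i _ => by positivity
  have hw' : ∑ _i ∈ s, (m : ℝ)⁻¹ = 1 := by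
    rw [Finset.sum_const, hs, nsmul_eq_mul]
    field_simp
  have hQpos : 0 < ∏ i ∈ s, (x i + y i) := Finset.prod_pos hz
  have hgm1 := Real.geom_mean_le_arith_mean_weighted s (fun _ => (m:ℝ)⁻¹)
    (fun i => x i / (x i + y i)) hw hw'
    (fun i hi => le_of_lt (div_pos (hx i hi) (hz i hi)))
  have hgm2 := Real.geom_mean_le_arith_mean_weighted s (fun _ => (m:ℝ)⁻¹)
    (fun i => y i / (x i + y i)) hw hw'
    (fun i hi => le_of_lt (div_pos (hy i hi) (hz i hi)))
  have hsum : (∑ i ∈ s, (m:ℝ)⁻¹ * (x i / (x i + y i)))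
      + (∑ i ∈ s, (m:ℝ)⁻¹ * (y i / (x i + y i))) = 1 := by
    rw [← Finset.sum_add_distrib, ← hw']
    apply Finset.sum_congr rfl
    intro i hi
    rw [← mul_add, ← add_div, div_self (hz i hi).ne']
    ring
  have hp1 : ∏ i ∈ s, (x i / (x i + y i)) ^ ((m:ℝ)⁻¹)
      = (∏ i ∈ s, x i) ^ ((m:ℝ)⁻¹) / (∏ i ∈ s, (x i + y i)) ^ ((m:ℝ)⁻¹) := by
    rw [Real.finset_prod_rpow s _ (fun i hi => le_of_lt (div_pos (hx i hi) (hz i hi))),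
      Finset.prod_div_distrib,
      Real.div_rpow (Finset.prod_nonneg fun i hi => (hx i hi).le)
        (Finset.prod_nonneg fun i hi => (hz i hi).le)]
  have hp2 : ∏ i ∈ s, (y i / (x i + y i)) ^ ((m:ℝ)⁻¹)
      = (∏ i ∈ s, y i) ^ ((m:ℝ)⁻¹) / (∏ i ∈ s, (x i + y i)) ^ ((m:ℝ)⁻¹) := by
    rw [Real.finset_prod_rpow s _ (fun i hi => le_of_lt (div_pos (hy i hi) (hz i hi))),
      Finset.prod_div_distrib,
      Real.div_rpow (Finset.prod_nonneg fun i hi => (hy i hi).le)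
        (Finset.prod_nonneg fun i hi => (hz i hi).le)]
  have hQr : 0 < (∏ i ∈ s, (x i + y i)) ^ ((m:ℝ)⁻¹) := Real.rpow_pos_of_pos hQpos _
  rw [hp1] at hgm1
  rw [hp2] at hgm2
  have := add_le_add hgm1 hgm2
  rw [hsum] at this
  rw [← add_div, div_le_one hQr] at this
  exact this

lemma gm_key {ι : Type*} (s : Finset ι) {m : ℕ} (hs : s.card = m) (hm : 0 < m)
    (x y : ι → ℝ) (hx : ∀ i ∈ s, 0 < x i) (hy : ∀ i ∈ s, 0 < y i)
    {a b c : ℝ} (ha : 0 ≤ a) (hb : 0 ≤ b) (hc : 0 < c)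
    (h1 : a ^ m ≤ (∏ i ∈ s, x i) * c) (h2 : b ^ m ≤ (∏ i ∈ s, y i) * c) :
    (a + b) ^ m ≤ (∏ i ∈ s, (x i + y i)) * c := by
  have hxP : 0 < ∏ i ∈ s, x i := Finset.prod_pos hx
  have hyP : 0 < ∏ i ∈ s, y i := Finset.prod_pos hy
  have hzP : 0 < ∏ i ∈ s, (x i + y i) :=
    Finset.prod_pos fun i hi => add_pos (hx i hi) (hy i hi)
  have hmne : m ≠ 0 := hm.ne'
  have ha' : a ≤ ((∏ i ∈ s, x i) * c) ^ ((m:ℝ)⁻¹) := by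
    have := Real.rpow_le_rpow (by positivity) h1 (by positivity : (0:ℝ) ≤ (m:ℝ)⁻¹)
    rwa [Real.pow_rpow_inv_natCast ha hmne] at this
  have hb' : b ≤ ((∏ i ∈ s, y i) * c) ^ ((m:ℝ)⁻¹) := by
    have := Real.rpow_le_rpow (by positivity) h2 (by positivity : (0:ℝ) ≤ (m:ℝ)⁻¹)
    rwa [Real.pow_rpow_inv_natCast hb hmne] at this
  have hmr1 : ((∏ i ∈ s, x i) * c) ^ ((m:ℝ)⁻¹)
      = (∏ i ∈ s, x i) ^ ((m:ℝ)⁻¹) * c ^ ((m:ℝ)⁻¹) :=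
    Real.mul_rpow hxP.le hc.le
  have hmr2 : ((∏ i ∈ s, y i) * c) ^ ((m:ℝ)⁻¹)
      = (∏ i ∈ s, y i) ^ ((m:ℝ)⁻¹) * c ^ ((m:ℝ)⁻¹) :=
    Real.mul_rpow hyP.le hc.le
  have hgm := gm_superadd s hs hm x y hx hy
  have hcr : (0:ℝ) ≤ c ^ ((m:ℝ)⁻¹) := (Real.rpow_pos_of_pos hc _).le
  have hab : a + b ≤ ((∏ i ∈ s, (x i + y i)) * c) ^ ((m:ℝ)⁻¹) := by
    rw [Real.mul_rpow hzP.le hc.le]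
    calc a + b ≤ (∏ i ∈ s, x i) ^ ((m:ℝ)⁻¹) * c ^ ((m:ℝ)⁻¹)
          + (∏ i ∈ s, y i) ^ ((m:ℝ)⁻¹) * c ^ ((m:ℝ)⁻¹) := by
          rw [← hmr1, ← hmr2]; exact add_le_add ha' hb'
      _ = ((∏ i ∈ s, x i) ^ ((m:ℝ)⁻¹) + (∏ i ∈ s, y i) ^ ((m:ℝ)⁻¹)) * c ^ ((m:ℝ)⁻¹) := by
          ring
      _ ≤ (∏ i ∈ s, (x i + y i)) ^ ((m:ℝ)⁻¹) * c ^ ((m:ℝ)⁻¹) :=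
          mul_le_mul_of_nonneg_right hgm hcr
  have := pow_le_pow_left₀ (by positivity) hab m
  rwa [Real.rpow_inv_natCast_pow (by positivity) hmne] at this

lemma hcZ_shearer {V : Type*} (Γ : SimpleGraph V) (lam : V → ℝ)
    (hpos : ∀ v, 0 < lam v) {ι : Type*} (m : ℕ) (I : Finset ι) :
    ∀ (n : ℕ) (B : ι → Finset V) (U : Finset V), U.card = n →
      (∀ v ∈ U, (I.filter (fun i => v ∈ B i)).card = m) →
      hcZ Γ lam U ^ m ≤ ∏ i ∈ I, hcZ Γ lam (B i) := by
  classical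
  have hZnn : ∀ W : Finset V, 0 ≤ hcZ Γ lam W :=
    fun W => (hcZ_pos Γ lam (fun v => (hpos v).le) W).le
  have hZ1 : ∀ W : Finset V, 1 ≤ hcZ Γ lam W :=
    fun W => one_le_hcZ Γ lam (fun v => (hpos v).le) W
  have hone : ∀ (J : Finset ι) (B : ι → Finset V), (1:ℝ) ≤ ∏ i ∈ J, hcZ Γ lam (B i) :=
    fun J B => by
      calc (1:ℝ) = ∏ _i ∈ J, 1 := by rw [Finset.prod_const_one]
        _ ≤ ∏ i ∈ J, hcZ Γ lam (B i) :=
          Finset.prod_le_prod (fun i _ => zero_le_one) (fun i _ => hZ1 (B i))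
  intro n
  induction n using Nat.strong_induction_on with
  | _ n IH =>
  intro B U hcard hcov
  rcases Finset.eq_empty_or_nonempty U with rfl | ⟨v, hv⟩
  · rw [hcZ_empty, one_pow]
    exact hone I B
  rcases Nat.eq_zero_or_pos m with rfl | hm
  · rw [pow_zero]
    exact hone I B
  -- main step
  have hn : 0 < n := by
    rw [← hcard]
    exact Finset.card_pos.2 ⟨v, hv⟩
  set P : V → Prop := fun w => ¬ w = v ∧ ¬ Γ.Adj v w with hP
  set U' : Finset V := U.erase v with hU'
  set U'' : Finset V := U.filter P with hU''
  have hcU' : U'.card < n := by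
    rw [hU', ← hcard]
    exact Finset.card_erase_lt_of_mem hv
  have hU''sub : U'' ⊆ U' := by
    intro w hw
    rw [hU'', Finset.mem_filter] at hw
    exact Finset.mem_erase.2 ⟨hw.2.1, hw.1⟩
  have hcU'' : U''.card < n := lt_of_le_of_lt (Finset.card_le_card hU''sub) hcU'
  -- induction hypotheses
  have ih1 := IH U'.card hcU' (fun i => (B i).erase v) U' rfl ?_
  rotate_left
  · intro w hw
    rw [hU', Finset.mem_erase] at hw
    rw [← hcov w hw.2]
    refine congrArg Finset.card (Finset.filter_congr ?_)
    intro i _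
    simp [Finset.mem_erase, hw.1]
  have ih2 := IH U''.card hcU'' (fun i => (B i).filter P) U'' rfl ?_
  rotate_left
  · intro w hw
    rw [hU'', Finset.mem_filter] at hw
    rw [← hcov w hw.1]
    refine congrArg Finset.card (Finset.filter_congr ?_)
    intro i _
    simp only [Finset.mem_filter]
    tauto
  -- split products over Iv vs complement
  set Iv : Finset ι := I.filter (fun i => v ∈ B i) with hIv
  have hmIv : Iv.card = m := hcov v hv
  set Pr : ℝ := ∏ i ∈ I.filter (fun i => ¬ v ∈ B i), hcZ Γ lam (B i) with hPr
  have hPrpos : 0 < Pr := lt_of_lt_of_le one_pos (hone _ _)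
  have hsplit : ∀ C : ι → Finset V,
      ∏ i ∈ I, hcZ Γ lam (C i)
        = (∏ i ∈ Iv, hcZ Γ lam (C i)) * ∏ i ∈ I.filter (fun i => ¬ v ∈ B i), hcZ Γ lam (C i) :=
    fun C => (Finset.prod_filter_mul_prod_filter_not I (fun i => v ∈ B i) _).symm
  have h1 : hcZ Γ lam U' ^ m ≤ (∏ i ∈ Iv, hcZ Γ lam ((B i).erase v)) * Pr := by
    refine ih1.trans ?_
    rw [hsplit (fun i => (B i).erase v)]
    apply mul_le_mul_of_nonneg_left _ (Finset.prod_nonneg fun i _ => hZnn _)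
    apply Finset.prod_le_prod (fun i _ => hZnn _)
    intro i hi
    rw [Finset.mem_filter] at hi
    rw [Finset.erase_eq_of_notMem hi.2]
  have h2 : hcZ Γ lam U'' ^ m ≤ (∏ i ∈ Iv, hcZ Γ lam ((B i).filter P)) * Pr := by
    refine ih2.trans ?_
    rw [hsplit (fun i => (B i).filter P)]
    apply mul_le_mul_of_nonneg_left _ (Finset.prod_nonneg fun i _ => hZnn _)
    apply Finset.prod_le_prod (fun i _ => hZnn _)
    intro i _
    exact hcZ_mono Γ lam (fun w => (hpos w).le) (Finset.filter_subset _ _)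
  -- deletion recursions
  have hrecU : hcZ Γ lam U = hcZ Γ lam U' + lam v * hcZ Γ lam U'' := hcZ_del Γ lam hv
  have hrecB : ∀ i ∈ Iv, hcZ Γ lam (B i)
      = hcZ Γ lam ((B i).erase v) + lam v * hcZ Γ lam ((B i).filter P) := by
    intro i hi
    rw [hIv, Finset.mem_filter] at hi
    exact hcZ_del Γ lam hi.2
  -- assemble via gm_key
  rw [hsplit B, hrecU]
  have h2' : (lam v * hcZ Γ lam U'') ^ m
      ≤ (∏ i ∈ Iv, (lam v * hcZ Γ lam ((B i).filter P))) * Pr := by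
    rw [Finset.prod_mul_distrib, Finset.prod_const, hmIv, mul_pow, mul_assoc]
    exact mul_le_mul_of_nonneg_left h2 (pow_nonneg (hpos v).le m)
  have := gm_key Iv hmIv hm (fun i => hcZ Γ lam ((B i).erase v))
    (fun i => lam v * hcZ Γ lam ((B i).filter P))
    (fun i _ => hcZ_pos Γ lam (fun w => (hpos w).le) _)
    (fun i _ => mul_pos (hpos v) (hcZ_pos Γ lam (fun w => (hpos w).le) _))
    (hZnn U') (mul_pos (hpos v) (hcZ_pos Γ lam (fun w => (hpos w).le) _)).le hPrpos h1 h2'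
  refine this.trans ?_
  apply mul_le_mul_of_nonneg_right _ hPrpos.le
  apply Finset.prod_le_prod
  · intro i hi
    exact add_nonneg (hZnn _)
      (mul_pos (hpos v) (hcZ_pos Γ lam (fun w => (hpos w).le) _)).le
  · intro i hi
    rw [hrecB i hi]

section group
variable {G V : Type*} [Group G] [MulAction G V] (Γ : SimpleGraph V) (lam : V → ℝ)

lemma hcZ_image_smul (hact : ∀ (g : G) (u w : V), Γ.Adj (g • u) (g • w) ↔ Γ.Adj u w)
    (hinv : ∀ (g : G) (v : V), lam (g • v) = lam v) (g : G) (S : Finset V) :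
    hcZ Γ lam (S.image (fun v => g • v)) = hcZ Γ lam S := by
  classical
  rw [hcZ, hcZ]
  refine Finset.sum_bij' (fun s _ => s.image (fun v => g⁻¹ • v))
    (fun t _ => t.image (fun v => g • v)) ?_ ?_ ?_ ?_ ?_
  · intro s hs
    simp only [Finset.mem_filter, Finset.mem_powerset] at hs ⊢
    obtain ⟨hsS, hind⟩ := hs
    constructor
    · intro w hw
      rcases Finset.mem_image.1 hw with ⟨a, ha, rfl⟩
      rcases Finset.mem_image.1 (hsS ha) with ⟨x, hx, rfl⟩
      rwa [inv_smul_smul]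
    · intro u hu w hw
      rcases Finset.mem_image.1 hu with ⟨a, ha, rfl⟩
      rcases Finset.mem_image.1 hw with ⟨b, hb, rfl⟩
      exact fun h => hind a ha b hb ((hact g⁻¹ a b).1 h)
  · intro t ht
    simp only [Finset.mem_filter, Finset.mem_powerset] at ht ⊢
    obtain ⟨htS, hind⟩ := ht
    constructor
    · intro w hw
      rcases Finset.mem_image.1 hw with ⟨a, ha, rfl⟩
      exact Finset.mem_image_of_mem _ (htS ha)
    · intro u hu w hw
      rcases Finset.mem_image.1 hu with ⟨a, ha, rfl⟩
      rcases Finset.mem_image.1 hw with ⟨b, hb, rfl⟩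
      exact fun h => hind a ha b hb ((hact g a b).1 h)
  · intro s _
    rw [Finset.image_image]
    simp [Function.comp_def, smul_inv_smul]
  · intro t _
    rw [Finset.image_image]
    simp [Function.comp_def, inv_smul_smul]
  · intro s _
    rw [Finset.prod_image (fun a _ b _ h => MulAction.injective g⁻¹ h)]
    exact Finset.prod_congr rfl fun a _ => (hinv g⁻¹ a).symm

lemma transl_mono {F F' : Finset G} (U₀ : Finset V) (h : F ⊆ F') :
    transl F U₀ ⊆ transl F' U₀ := by
  intro v hv
  simp only [transl, Finset.mem_image, Finset.mem_product] at hv ⊢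
  obtain ⟨q, ⟨h1, h2⟩, rfl⟩ := hv
  exact ⟨q, ⟨h h1, h2⟩, rfl⟩

lemma transl_smul (g : G) (K : Finset G) (U₀ : Finset V) :
    transl (K.image (fun k => g * k)) U₀ = (transl K U₀).image (fun v => g • v) := by
  classical
  ext v
  simp only [transl, Finset.mem_image, Finset.mem_product]
  constructor
  · rintro ⟨⟨a, u⟩, ⟨ha, hu⟩, rfl⟩
    obtain ⟨k, hk, rfl⟩ := ha
    exact ⟨k • u, ⟨⟨k, u⟩, ⟨hk, hu⟩, rfl⟩, (mul_smul g k u).symm⟩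
  · rintro ⟨w, ⟨⟨k, u⟩, ⟨hk, hu⟩, rfl⟩, rfl⟩
    exact ⟨⟨g * k, u⟩, ⟨⟨k, hk, rfl⟩, hu⟩, mul_smul g k u⟩

lemma key_ineq (U₀ : Finset V) (hpos : ∀ v, 0 < lam v) (Fs K : Finset G) :
    hcZ Γ lam (transl Fs U₀) ^ K.card
      ≤ ∏ g ∈ (Fs ×ˢ K).image (fun p => p.1 * p.2⁻¹),
          hcZ Γ lam (transl (Fs ∩ K.image (fun k => g * k)) U₀) := by
  classical
  rcases isEmpty_or_nonempty V with hV | hV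
  · have hUe : transl Fs U₀ = ∅ := Finset.eq_empty_of_isEmpty _
    rw [hUe, hcZ_empty, one_pow]
    calc (1:ℝ) = ∏ _g ∈ (Fs ×ˢ K).image (fun p => p.1 * p.2⁻¹), 1 := by
          rw [Finset.prod_const_one]
      _ ≤ _ := Finset.prod_le_prod (fun i _ => zero_le_one)
          (fun i _ => one_le_hcZ Γ lam (fun w => (hpos w).le) _)
  haveI : Inhabited (G × V) := Classical.inhabited_of_nonempty inferInstance
  have hrep : ∀ v, v ∈ transl Fs U₀ →
      ∃ q : G × V, (q.1 ∈ Fs ∧ q.2 ∈ U₀) ∧ q.1 • q.2 = v := by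
    intro v hv
    simp only [transl, Finset.mem_image, Finset.mem_product] at hv
    exact hv
  choose! p hp1 hp2 using hrep
  set U : Finset V := transl Fs U₀ with hU
  set I : Finset G := (Fs ×ˢ K).image (fun q => q.1 * q.2⁻¹) with hI
  set B : G → Finset V := fun g =>
    U.filter (fun v => (p v).1 ∈ K.image (fun k => g * k)) with hB
  have hcov : ∀ v ∈ U, (I.filter (fun g => v ∈ B g)).card = K.card := by
    intro v hv
    have heq : I.filter (fun g => v ∈ B g) = K.image (fun k => (p v).1 * k⁻¹) := by
      ext g
      constructor
      · intro hg
        rw [Finset.mem_filter] at hg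
        obtain ⟨-, hvB⟩ := hg
        rw [hB, Finset.mem_filter] at hvB
        rcases Finset.mem_image.1 hvB.2 with ⟨k, hk, hgk⟩
        refine Finset.mem_image.2 ⟨k, hk, ?_⟩
        rw [← hgk]
        group
      · intro hg
        rcases Finset.mem_image.1 hg with ⟨k, hk, rfl⟩
        refine Finset.mem_filter.2 ⟨?_, ?_⟩
        · exact Finset.mem_image.2 ⟨⟨(p v).1, k⟩,
            Finset.mem_product.2 ⟨(hp1 v hv).1, hk⟩, rfl⟩
        · rw [hB, Finset.mem_filter]
          exact ⟨hv, Finset.mem_image.2 ⟨k, hk, inv_mul_cancel_right _ _⟩⟩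
    rw [heq]
    apply Finset.card_image_of_injective
    intro a b hab
    simpa using mul_left_cancel hab
  have hshear := hcZ_shearer Γ lam hpos K.card I U.card B U rfl hcov
  refine hshear.trans ?_
  apply Finset.prod_le_prod
  · exact fun g _ => (hcZ_pos Γ lam (fun w => (hpos w).le) _).le
  · intro g _
    apply hcZ_mono Γ lam (fun w => (hpos w).le)
    intro v hvB
    rw [hB, Finset.mem_filter] at hvB
    obtain ⟨hv, hKg⟩ := hvB
    refine Finset.mem_image.2 ⟨⟨(p v).1, (p v).2⟩, ?_, hp2 v hv⟩
    exact Finset.mem_product.2 ⟨Finset.mem_inter.2 ⟨(hp1 v hv).1, hKg⟩, (hp1 v hv).2⟩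

end group

theorem limit_log_partition_function_eq_inf
    {G V : Type*} [Group G] [Countable G] [Countable V]
    [MulAction G V] (Γ : SimpleGraph V)
    -- G acts by graph automorphisms:
    (hact : ∀ (g : G) (u w : V), Γ.Adj (g • u) (g • w) ↔ Γ.Adj u w)
    -- Γ is locally finite (looplessness is built into `SimpleGraph`):
    (hlf : ∀ v : V, (Γ.neighborSet v).Finite)
    -- the action is almost free:
    (hfree : ∀ v : V, {g : G | g • v = v}.Finite)
    -- G is amenable:
    (hamen : ∃ F : ℕ → Finset G, IsFolnerSeq F)
    -- U₀ is a fundamental domain (this also makes the action almost transitive):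
    (U₀ : Finset V) (hU₀ : IsFundDom G U₀)
    -- λ is a positive G-invariant activity function:
    (lam : V → ℝ) (hpos : ∀ v, 0 < lam v)
    (hinv : ∀ (g : G) (v : V), lam (g • v) = lam v)
    -- any Følner sequence:
    (F : ℕ → Finset G) (hF : IsFolnerSeq F) :
    Tendsto
      (fun n => Real.log (hcZ Γ lam (transl (F n) U₀)) / ((F n).card : ℝ))
      atTop
      (nhds (⨅ F' : {F' : Finset G // F'.Nonempty},
        Real.log (hcZ Γ lam (transl F'.1 U₀)) / ((F'.1).card : ℝ))) := by
    classical
  have hposle : ∀ v, 0 ≤ lam v := fun v => (hpos v).le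
  have hZpos : ∀ S : Finset V, 0 < hcZ Γ lam S := hcZ_pos Γ lam hposle
  have hlognn : ∀ A : Finset G, 0 ≤ Real.log (hcZ Γ lam (transl A U₀)) :=
    fun A => Real.log_nonneg (one_le_hcZ Γ lam hposle _)
  haveI hne : Nonempty {F' : Finset G // F'.Nonempty} :=
    ⟨⟨{1}, Finset.singleton_nonempty 1⟩⟩
  have hbdd : BddBelow (Set.range fun F' : {F' : Finset G // F'.Nonempty} =>
      Real.log (hcZ Γ lam (transl F'.1 U₀)) / ((F'.1).card : ℝ)) := by
    refine ⟨0, ?_⟩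
    rintro x ⟨i, rfl⟩
    exact div_nonneg (hlognn i.1) (Nat.cast_nonneg _)
  refine tendsto_order.2 ⟨fun a ha => ?_, fun b hb => ?_⟩
  · refine Filter.Eventually.of_forall (fun n => lt_of_lt_of_le ha ?_)
    exact ciInf_le hbdd ⟨F n, hF.1 n⟩
  · obtain ⟨⟨K, hKne⟩, hKb⟩ := exists_lt_of_ciInf_lt hb
    have hKcpos : (0:ℝ) < (K.card : ℝ) := by
      exact_mod_cast Finset.card_pos.2 hKne
    -- the main per-set inequality
    have main : ∀ A : Finset G, A.Nonempty →
        Real.log (hcZ Γ lam (transl A U₀)) / ((A.card : ℝ))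
          ≤ (Real.log (hcZ Γ lam (transl K U₀)) / ((K.card : ℝ))) *
            (1 + ∑ k ∈ K, (((A.image (· * k⁻¹)) ∆ A).card : ℝ) / ((A.card : ℝ))) := by
      intro A hA
      have hAcpos : (0:ℝ) < (A.card : ℝ) := by
        exact_mod_cast Finset.card_pos.2 hA
      set I : Finset G := (A ×ˢ K).image (fun p => p.1 * p.2⁻¹) with hI
      have hkey := key_ineq Γ lam U₀ hpos A K
      have hlog : (K.card : ℝ) * Real.log (hcZ Γ lam (transl A U₀))
          ≤ (I.card : ℝ) * Real.log (hcZ Γ lam (transl K U₀)) := by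
        have l1 := Real.log_le_log (pow_pos (hZpos _) K.card) hkey
        rw [Real.log_pow, Real.log_prod (fun g _ => (hZpos _).ne')] at l1
        have l2 : ∑ g ∈ I, Real.log (hcZ Γ lam (transl (A ∩ K.image (fun k => g * k)) U₀))
            ≤ ∑ _g ∈ I, Real.log (hcZ Γ lam (transl K U₀)) := by
          refine Finset.sum_le_sum (fun g _ => ?_)
          calc Real.log (hcZ Γ lam (transl (A ∩ K.image (fun k => g * k)) U₀))
              ≤ Real.log (hcZ Γ lam (transl (K.image (fun k => g * k)) U₀)) :=
                Real.log_le_log (hZpos _)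
                  (hcZ_mono Γ lam hposle (transl_mono U₀ Finset.inter_subset_right))
            _ = Real.log (hcZ Γ lam (transl K U₀)) := by
                rw [transl_smul, hcZ_image_smul Γ lam hact hinv]
        rw [Finset.sum_const, nsmul_eq_mul] at l2
        calc (K.card : ℝ) * Real.log (hcZ Γ lam (transl A U₀)) ≤ _ := l1
          _ ≤ (I.card : ℝ) * Real.log (hcZ Γ lam (transl K U₀)) := l2
      have hInat : I.card ≤ A.card + ∑ k ∈ K, ((A.image (· * k⁻¹)) ∆ A).card := by
        have hsub : I ⊆ A ∪ K.biUnion (fun k => (A.image (· * k⁻¹)) \ A) := by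
          intro g hg
          rcases Finset.mem_image.1 hg with ⟨⟨f, k⟩, hfk, rfl⟩
          rw [Finset.mem_product] at hfk
          by_cases hgA : f * k⁻¹ ∈ A
          · exact Finset.mem_union_left _ hgA
          · refine Finset.mem_union_right _ (Finset.mem_biUnion.2 ⟨k, hfk.2, ?_⟩)
            exact Finset.mem_sdiff.2 ⟨Finset.mem_image.2 ⟨f, hfk.1, rfl⟩, hgA⟩
        calc I.card ≤ (A ∪ K.biUnion (fun k => (A.image (· * k⁻¹)) \ A)).card :=
              Finset.card_le_card hsub
          _ ≤ A.card + (K.biUnion (fun k => (A.image (· * k⁻¹)) \ A)).card :=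
              Finset.card_union_le _ _
          _ ≤ A.card + ∑ k ∈ K, ((A.image (· * k⁻¹)) \ A).card :=
              Nat.add_le_add_left (Finset.card_biUnion_le) _
          _ ≤ A.card + ∑ k ∈ K, ((A.image (· * k⁻¹)) ∆ A).card := by
              refine Nat.add_le_add_left (Finset.sum_le_sum fun k _ => ?_) _
              refine Finset.card_le_card ?_
              intro x hx
              rw [Finset.mem_symmDiff]
              exact Or.inl ⟨(Finset.mem_sdiff.1 hx).1, (Finset.mem_sdiff.1 hx).2⟩
      have hIcard : (I.card : ℝ)
          ≤ (A.card : ℝ) + ∑ k ∈ K, (((A.image (· * k⁻¹)) ∆ A).card : ℝ) := by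
        push_cast
        exact_mod_cast hInat
      set LA := Real.log (hcZ Γ lam (transl A U₀)) with hLA
      set LK := Real.log (hcZ Γ lam (transl K U₀)) with hLK
      set D : ℝ := ∑ k ∈ K, (((A.image (· * k⁻¹)) ∆ A).card : ℝ) with hD
      have hDnn : 0 ≤ D := Finset.sum_nonneg fun k _ => Nat.cast_nonneg _
      have hLKnn : 0 ≤ LK := hlognn K
      have hcomb : (K.card : ℝ) * LA ≤ ((A.card : ℝ) + D) * LK :=
        hlog.trans (mul_le_mul_of_nonneg_right hIcard hLKnn)
      have hDsum : ∑ k ∈ K, (((A.image (· * k⁻¹)) ∆ A).card : ℝ) / ((A.card : ℝ))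
          = D / (A.card : ℝ) := by
        rw [hD, Finset.sum_div]
      rw [hDsum]
      have hrhs : (LK / (K.card : ℝ)) * (1 + D / (A.card : ℝ))
          = (((A.card : ℝ) + D) * LK) / ((K.card : ℝ) * (A.card : ℝ)) := by
        field_simp
      rw [hrhs, div_le_div_iff₀ hAcpos (by positivity)]
      nlinarith [mul_le_mul_of_nonneg_right hcomb hAcpos.le]
    -- limit of the error term
    have hδ : Tendsto (fun n => ∑ k ∈ K,
        ((((F n).image (· * k⁻¹)) ∆ (F n)).card : ℝ) / (((F n).card : ℝ)))
        atTop (nhds 0) := by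
      have := tendsto_finset_sum K (fun k _ => hF.2 k⁻¹)
      simpa using this
    have hlim : Tendsto (fun n =>
        (Real.log (hcZ Γ lam (transl K U₀)) / ((K.card : ℝ))) *
          (1 + ∑ k ∈ K, ((((F n).image (· * k⁻¹)) ∆ (F n)).card : ℝ) / (((F n).card : ℝ))))
        atTop (nhds (Real.log (hcZ Γ lam (transl K U₀)) / ((K.card : ℝ)))) := by
      have h1 : Tendsto (fun n =>
          1 + ∑ k ∈ K, ((((F n).image (· * k⁻¹)) ∆ (F n)).card : ℝ) / (((F n).card : ℝ)))
          atTop (nhds 1) := by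
        have := (tendsto_const_nhds (x := (1:ℝ)) (f := atTop (α := ℕ))).add hδ
        simpa using this
      have := (tendsto_const_nhds
        (x := Real.log (hcZ Γ lam (transl K U₀)) / ((K.card : ℝ)))
        (f := atTop (α := ℕ))).mul h1
      simpa using this
    have hev := hlim.eventually_lt_const hKb
    filter_upwards [hev] with n hn
    exact lt_of_le_of_lt (main (F n) (hF.1 n)) hn
end

section
/- Let G be a countable amenable group acting almost freely and almost transitively by graph automorphisms on a countable, loopless, locally finite graph Γ, and let U_0 be a fundamental domain. Then for every Følner sequence {F_n} in G, lim_n |F_n U_0|/|F_n| = ∑_{v∈U_0} |Stab_G(v)|^{-1}, where Stab_G(v) = {g ∈ G : gv = v}. -/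
/-!
STATEMENT 3:
Let `G` be a countable amenable group acting almost freely and almost
transitively by graph automorphisms on a countable, loopless, locally finite
graph `Γ`, and let `U₀` be a fundamental domain.  Then for every Følner
sequence `{Fₙ}` in `G`, `limₙ |Fₙ U₀|/|Fₙ| = ∑_{v ∈ U₀} |Stab_G(v)|⁻¹`,
where `Stab_G(v) = {g ∈ G : g v = v}`.
-/

open scoped Classical symmDiff
open Filter

lemma key_orbit_limit {G V : Type*} [Group G] [MulAction G V]
    (u : V) (S : Finset G) (hS : ∀ g : G, g ∈ S ↔ g • u = u)
    (F : ℕ → Finset G) (hF : IsFolnerSeq F) :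
    Tendsto (fun n => (((F n).image (· • u)).card : ℝ) / ((F n).card : ℝ))
      atTop (nhds ((S.card : ℝ)⁻¹)) := by
  have hone : (1 : G) ∈ S := by rw [hS]; simp
  have hk : 0 < S.card := Finset.card_pos.mpr ⟨1, hone⟩
  have hkR : (0 : ℝ) < S.card := by exact_mod_cast hk
  -- closure of S under multiplication
  have hmul : ∀ s ∈ S, ∀ s' ∈ S, s * s' ∈ S := by
    intro s hs s' hs'
    rw [hS] at *
    rw [mul_smul, hs', hs]
  -- B n : elements of F n whose whole coset is in F n
  set B : ℕ → Finset G := fun n => (F n).filter (fun g => ∀ s ∈ S, g * s ∈ F n) with hB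
  have hBsub : ∀ n, B n ⊆ F n := fun n => Finset.filter_subset _ _
  have haR : ∀ n, (0 : ℝ) < (F n).card := by
    intro n; exact_mod_cast Finset.card_pos.mpr (hF.1 n)
  -- L1 : lower bound
  have L1 : ∀ n, (F n).card ≤ S.card * ((F n).image (· • u)).card := by
    intro n
    rw [Finset.card_eq_sum_card_image (· • u) (F n)]
    calc ∑ b ∈ (F n).image (· • u), ((F n).filter (fun g => g • u = b)).card
        ≤ ∑ _b ∈ (F n).image (· • u), S.card := by
          apply Finset.sum_le_sum
          intro b hb
          obtain ⟨g₀, hg₀, hg₀b⟩ := Finset.mem_image.mp hb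
          have : (F n).filter (fun g => g • u = b) ⊆ S.image (fun s => g₀ * s) := by
            intro g hg
            simp only [Finset.mem_filter] at hg
            refine Finset.mem_image.mpr ⟨g₀⁻¹ * g, ?_, by group⟩
            rw [hS, mul_smul, hg.2, ← hg₀b, inv_smul_smul]
          calc ((F n).filter (fun g => g • u = b)).card
              ≤ (S.image (fun s => g₀ * s)).card := Finset.card_le_card this
            _ ≤ S.card := Finset.card_image_le
      _ = ((F n).image (· • u)).card * S.card := by rw [Finset.sum_const, smul_eq_mul]
      _ = S.card * ((F n).image (· • u)).card := mul_comm _ _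
  -- L2 : B n is a union of full cosets
  have L2 : ∀ n, (B n).card = S.card * ((B n).image (· • u)).card := by
    intro n
    rw [Finset.card_eq_sum_card_image (· • u) (B n)]
    rw [Finset.sum_congr rfl (g := fun _ => S.card), Finset.sum_const, smul_eq_mul, mul_comm]
    intro b hb
    obtain ⟨g₀, hg₀, hg₀b⟩ := Finset.mem_image.mp hb
    have hg₀' := Finset.mem_filter.mp hg₀
    have heq : (B n).filter (fun g => g • u = b) = S.image (fun s => g₀ * s) := by
      apply Finset.Subset.antisymm
      · intro g hg
        simp only [Finset.mem_filter] at hg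
        refine Finset.mem_image.mpr ⟨g₀⁻¹ * g, ?_, by group⟩
        rw [hS, mul_smul, hg.2, ← hg₀b, inv_smul_smul]
      · intro x hx
        obtain ⟨s, hs, rfl⟩ := Finset.mem_image.mp hx
        have hmem : g₀ * s ∈ B n := by
          rw [hB]
          refine Finset.mem_filter.mpr ⟨hg₀'.2 s hs, ?_⟩
          intro s' hs'
          rw [mul_assoc]
          exact hg₀'.2 _ (hmul s hs s' hs')
        refine Finset.mem_filter.mpr ⟨hmem, ?_⟩
        have : s • u = u := (hS s).mp hs
        rw [mul_smul, this, hg₀b]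
    rw [heq]
    exact Finset.card_image_of_injective _ (mul_right_injective g₀)
  -- L3 : upper bound on image card
  have L3 : ∀ n, (((F n).image (· • u)).card : ℕ)
      ≤ ((B n).image (· • u)).card + ((F n) \ (B n)).card := by
    intro n
    have hun : B n ∪ ((F n) \ (B n)) = F n := Finset.union_sdiff_of_subset (hBsub n)
    calc ((F n).image (· • u)).card
        = ((B n ∪ ((F n) \ (B n))).image (· • u)).card := by rw [hun]
      _ = ((B n).image (· • u) ∪ ((F n \ B n).image (· • u))).card := by
          rw [Finset.image_union]
      _ ≤ ((B n).image (· • u)).card + ((F n \ B n).image (· • u)).card :=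
          Finset.card_union_le _ _
      _ ≤ ((B n).image (· • u)).card + (F n \ B n).card := by
          gcongr; exact Finset.card_image_le
  -- L4 : the error is controlled by symmetric differences
  have L4 : ∀ n, ((F n) \ (B n)).card
      ≤ ∑ s ∈ S, (((F n).image (· * s⁻¹)) ∆ (F n)).card := by
    intro n
    calc ((F n) \ (B n)).card
        ≤ (S.biUnion (fun s => ((F n).image (· * s⁻¹)) ∆ (F n))).card := by
          apply Finset.card_le_card
          intro g hg
          simp only [Finset.mem_sdiff, hB, Finset.mem_filter, not_and, not_forall] at hg
          obtain ⟨hgF, hq⟩ := hg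
          obtain ⟨s, hs, hns⟩ := hq hgF
          refine Finset.mem_biUnion.mpr ⟨s, hs, ?_⟩
          rw [Finset.mem_symmDiff]
          right
          refine ⟨hgF, ?_⟩
          intro hmem
          obtain ⟨h, hh, hhe⟩ := Finset.mem_image.mp hmem
          apply hns
          have : h = g * s := by rw [← hhe]; group
          rwa [← this]
      _ ≤ ∑ s ∈ S, (((F n).image (· * s⁻¹)) ∆ (F n)).card := Finset.card_biUnion_le
  -- error term
  set err : ℕ → ℝ := fun n =>
    ∑ s ∈ S, ((((F n).image (· * s⁻¹)) ∆ (F n)).card : ℝ) / ((F n).card : ℝ) with herr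
  have herr0 : Tendsto err atTop (nhds 0) := by
    have h := tendsto_finset_sum S (fun s (_ : s ∈ S) => hF.2 s⁻¹)
    rw [Finset.sum_const_zero] at h
    exact h
  -- squeeze
  have hlow : ∀ n, (S.card : ℝ)⁻¹
      ≤ (((F n).image (· • u)).card : ℝ) / ((F n).card : ℝ) := by
    intro n
    rw [inv_eq_one_div, div_le_div_iff₀ hkR (haR n)]
    have := L1 n
    have : ((F n).card : ℝ) ≤ (S.card : ℝ) * (((F n).image (· • u)).card : ℝ) := by
      exact_mod_cast this
    linarith
  have hupp : ∀ n, (((F n).image (· • u)).card : ℝ) / ((F n).card : ℝ)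
      ≤ (S.card : ℝ)⁻¹ + err n := by
    intro n
    have h2 : ((B n).card : ℝ) = (S.card : ℝ) * (((B n).image (· • u)).card : ℝ) := by
      exact_mod_cast L2 n
    have hBle : ((B n).card : ℝ) ≤ ((F n).card : ℝ) := by
      exact_mod_cast Finset.card_le_card (hBsub n)
    have h3 : ((((F n).image (· • u)).card : ℝ))
        ≤ (((B n).image (· • u)).card : ℝ) + (((F n) \ (B n)).card : ℝ) := by
      exact_mod_cast L3 n
    have h4 : ((((F n) \ (B n)).card : ℝ)) / ((F n).card : ℝ) ≤ err n := by
      show _ ≤ ∑ s ∈ S, ((((F n).image (· * s⁻¹)) ∆ (F n)).card : ℝ) / ((F n).card : ℝ)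
      rw [← Finset.sum_div]
      gcongr
      exact_mod_cast L4 n
    have h5 : (((B n).image (· • u)).card : ℝ) ≤ ((F n).card : ℝ) / (S.card : ℝ) := by
      rw [le_div_iff₀ hkR]
      linarith [h2, hBle]
    have h6 : ((((F n).image (· • u)).card : ℝ))
        ≤ ((F n).card : ℝ) / (S.card : ℝ) + (((F n) \ (B n)).card : ℝ) := by
      linarith
    calc (((F n).image (· • u)).card : ℝ) / ((F n).card : ℝ)
        ≤ (((F n).card : ℝ) / (S.card : ℝ) + (((F n) \ (B n)).card : ℝ)) / ((F n).card : ℝ) := by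
          gcongr
      _ = (S.card : ℝ)⁻¹ + (((F n) \ (B n)).card : ℝ) / ((F n).card : ℝ) := by
          rw [add_div, div_div, mul_comm (S.card : ℝ), ← div_div, div_self (haR n).ne',
            one_div]
      _ ≤ (S.card : ℝ)⁻¹ + err n := by linarith
  have hupl : Tendsto (fun n => (S.card : ℝ)⁻¹ + err n) atTop (nhds ((S.card : ℝ)⁻¹)) := by
    have h := herr0.const_add ((S.card : ℝ)⁻¹)
    rw [add_zero] at h
    exact h
  exact tendsto_of_tendsto_of_tendsto_of_le_of_le tendsto_const_nhds hupl hlow hupp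

theorem limit_card_translate_eq_sum_inv_stabilizers
    {G V : Type*} [Group G] [Countable G] [Countable V]
    [MulAction G V] (Γ : SimpleGraph V)
    -- G acts by graph automorphisms:
    (hact : ∀ (g : G) (u w : V), Γ.Adj (g • u) (g • w) ↔ Γ.Adj u w)
    -- Γ is locally finite (looplessness is built into `SimpleGraph`):
    (hlf : ∀ v : V, (Γ.neighborSet v).Finite)
    -- the action is almost free:
    (hfree : ∀ v : V, {g : G | g • v = v}.Finite)
    -- G is amenable:
    (hamen : ∃ F : ℕ → Finset G, IsFolnerSeq F)
    -- U₀ is a fundamental domain (this also makes the action almost transitive):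
    (U₀ : Finset V) (hU₀ : IsFundDom G U₀)
    -- any Følner sequence:
    (F : ℕ → Finset G) (hF : IsFolnerSeq F) :
    Tendsto (fun n => ((transl (F n) U₀).card : ℝ) / ((F n).card : ℝ)) atTop
      (nhds (∑ v ∈ U₀, ((Nat.card {g : G // g • v = v} : ℝ))⁻¹)) := by
  -- the stabilizer finsets
  set S : V → Finset G := fun v => (hfree v).toFinset with hSdef
  have hSpec : ∀ v : V, ∀ g : G, g ∈ S v ↔ g • v = v := by
    intro v g
    simp [hSdef, Set.Finite.mem_toFinset]
  have hScard : ∀ v : V, (Nat.card {g : G // g • v = v}) = (S v).card := by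
    intro v
    have h1 : Nat.card {g : G // g • v = v} = Nat.card {g : G | g • v = v} := rfl
    rw [h1, Nat.card_coe_set_eq, Set.ncard_eq_toFinset_card _ (hfree v)]
  -- distinct elements of U₀ lie in distinct orbits, by minimality
  have horb : ∀ u ∈ U₀, ∀ u' ∈ U₀, ∀ g : G, g • u = u' → u = u' := by
    intro u hu u' hu' g hg
    by_contra hne
    have hgen : Generating G (U₀.erase u') := by
      intro v
      obtain ⟨h', w, hw, hwv⟩ := hU₀.1 v
      by_cases hwu : w = u'
      · refine ⟨h' * g, u, Finset.mem_erase.mpr ⟨hne, hu⟩, ?_⟩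
        rw [mul_smul, hg, ← hwu, hwv]
      · exact ⟨h', w, Finset.mem_erase.mpr ⟨hwu, hw⟩, hwv⟩
    have he := hU₀.2 (U₀.erase u') (Finset.erase_subset _ _) hgen
    rw [← he] at hu'
    exact (Finset.notMem_erase u' U₀) hu'
  have hdisj : ∀ n, ∀ u ∈ U₀, ∀ u' ∈ U₀, u ≠ u' →
      Disjoint ((F n).image (· • u)) ((F n).image (· • u')) := by
    intro n u hu u' hu' hne
    rw [Finset.disjoint_left]
    intro x hx hx'
    obtain ⟨g, _, rfl⟩ := Finset.mem_image.mp hx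
    obtain ⟨g', _, he⟩ := Finset.mem_image.mp hx'
    have hcf : (g'⁻¹ * g) • u = u' := by rw [mul_smul, ← he, inv_smul_smul]
    exact hne (horb u hu u' hu' _ hcf)
  -- the translate is the disjoint union of the orbit pieces
  have htr : ∀ n, transl (F n) U₀ = U₀.biUnion (fun u => (F n).image (· • u)) := by
    intro n
    ext v
    simp only [transl, Finset.mem_image, Finset.mem_product, Finset.mem_biUnion, Prod.exists]
    constructor
    · rintro ⟨g, u, ⟨hg, hu⟩, rfl⟩; exact ⟨u, hu, g, hg, rfl⟩
    · rintro ⟨u, hu, g, hg, rfl⟩; exact ⟨g, u, ⟨hg, hu⟩, rfl⟩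
  have hcard : ∀ n, (transl (F n) U₀).card = ∑ u ∈ U₀, ((F n).image (· • u)).card := by
    intro n
    rw [htr n]
    exact Finset.card_biUnion (hdisj n)
  have heq : (fun n => ((transl (F n) U₀).card : ℝ) / ((F n).card : ℝ))
      = fun n => ∑ u ∈ U₀, (((F n).image (· • u)).card : ℝ) / ((F n).card : ℝ) := by
    funext n
    rw [hcard n, Nat.cast_sum, Finset.sum_div]
  rw [heq]
  have hval : (∑ v ∈ U₀, ((Nat.card {g : G // g • v = v} : ℝ))⁻¹)
      = ∑ v ∈ U₀, (((S v).card : ℝ))⁻¹ :=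
    Finset.sum_congr rfl (fun v _ => by rw [hScard v])
  rw [hval]
  exact tendsto_finset_sum U₀ (fun v _ => key_orbit_limit v (S v) (hSpec v) F hF)
end

section
/- Let Γ = (V,E) be a countable, loopless, locally finite graph and λ: V → ℝ_{>0} an activity function. Then every Gibbs measure P for (Γ,λ) is fully supported on X(Γ): for every independent set x ∈ X(Γ) and every finite U ⊆ V, P([x_U]) > 0. -/
/-!
STATEMENT 7:
Let `Γ = (V, E)` be a countable, loopless, locally finite graph and
`λ : V → ℝ_{>0}` an activity function.  Then every Gibbs measure `P` for
`(Γ, λ)` is fully supported on `X(Γ)`: for every independent set `x ∈ X(Γ)`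
and every finite `U ⊆ V`, `P([x_U]) > 0`.
-/

open scoped Classical
open MeasureTheory

section HardcoreGibbs

variable {V : Type*}

/-- `x : V → Bool` is an independent set of `Γ`. -/
def IsIndep (Γ : SimpleGraph V) (x : V → Bool) : Prop :=
  ∀ u w : V, Γ.Adj u w → ¬(x u = true ∧ x w = true)

/-- `X(Γ)`, the space of independent sets of `Γ`, as a subset of `{0,1}^V`. -/
def indepSets (Γ : SimpleGraph V) : Set (V → Bool) := {x | IsIndep Γ x}

/-- The cylinder set `[x_W]` of configurations agreeing with `x` on `W`. -/
def cyl (x : V → Bool) (W : Set V) : Set (V → Bool) := {y | ∀ v ∈ W, y v = x v}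

/-- The configuration equal (as a subset) to `s` on `U` and to `y` off `U`. -/
noncomputable def patch (U s : Finset V) (y : V → Bool) : V → Bool :=
  fun v => if v ∈ U then (if v ∈ s then true else false) else y v

/-- Unnormalized weight, under boundary condition `y`, of the configurations on
`U` that lie in the event `A`: the sum over subsets `s ⊆ U` whose concatenation
with `y` off `U` is an independent set belonging to `A`, of `∏_{v ∈ s} λ(v)`. -/
noncomputable def specWt (Γ : SimpleGraph V) (lam : V → ℝ) (U : Finset V)
    (y : V → Bool) (A : Set (V → Bool)) : ℝ :=
  ∑ s ∈ U.powerset,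
    if patch U s y ∈ indepSets Γ ∧ patch U s y ∈ A then ∏ v ∈ s, lam v else 0

/-- The Gibbs specification element `π^y_U(A)` of the hardcore model. -/
noncomputable def spec (Γ : SimpleGraph V) (lam : V → ℝ) (U : Finset V)
    (y : V → Bool) (A : Set (V → Bool)) : ℝ :=
  specWt Γ lam U y A / specWt Γ lam U y Set.univ

/-- The σ-algebra `𝓑_W` generated by the coordinates in `W`. -/
def coordSigma (W : Set V) : MeasurableSpace (V → Bool) :=
  MeasurableSpace.comap (fun y (v : W) => y (v : V)) inferInstance

/-- `P` is a Gibbs measure for the hardcore model `(Γ, λ)`: a Borel probability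
measure on `X(Γ)` such that for every finite `U`, every `U' ⊆ U` and every
`x ∈ X(Γ)`, the conditional probability of `[x_{U'}]` given `𝓑_{U^c}` is
`P`-a.s. equal to `y ↦ π^y_U([x_{U'}])`. -/
def IsGibbs (Γ : SimpleGraph V) (lam : V → ℝ) (P : Measure (V → Bool)) : Prop :=
  IsProbabilityMeasure P ∧ P (indepSets Γ) = 1 ∧
    ∀ U U' : Finset V, U' ⊆ U → ∀ x ∈ indepSets Γ,
      (P[(cyl x (U' : Set V)).indicator (fun _ => (1 : ℝ)) |
          coordSigma ((U : Set V)ᶜ)])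
        =ᵐ[P] fun y => spec Γ lam U y (cyl x (U' : Set V))

end HardcoreGibbs


section Aux

variable {V : Type*}

lemma measurableSet_cyl (x : V → Bool) (U : Finset V) :
    MeasurableSet (cyl x (U : Set V)) := by
  have h : cyl x (U : Set V) = ⋂ v ∈ (U : Set V), {y : V → Bool | y v = x v} := by
    ext y; simp [cyl]
  rw [h]
  refine MeasurableSet.biInter U.countable_toSet fun v _ => ?_
  have h2 : {y : V → Bool | y v = x v} = (fun y : V → Bool => y v) ⁻¹' {x v} := by
    ext y; simp
  rw [h2]
  exact (measurable_pi_apply v) (measurableSet_singleton (x v))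

lemma measurableSet_indepSets [Countable V] (Γ : SimpleGraph V) :
    MeasurableSet (indepSets Γ) := by
  have h : indepSets Γ =
      ⋂ (u : V) (w : V), {y : V → Bool | Γ.Adj u w → ¬(y u = true ∧ y w = true)} := by
    ext y; simp [indepSets, IsIndep]
  rw [h]
  refine MeasurableSet.iInter fun u => MeasurableSet.iInter fun w => ?_
  by_cases hadj : Γ.Adj u w
  · have h2 : {y : V → Bool | Γ.Adj u w → ¬(y u = true ∧ y w = true)}
        = ((fun y : V → Bool => y u) ⁻¹' {true} ∩ (fun y : V → Bool => y w) ⁻¹' {true})ᶜ := by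
      ext y; simp [hadj]
    rw [h2]
    exact (((measurable_pi_apply u) (measurableSet_singleton true)).inter
      ((measurable_pi_apply w) (measurableSet_singleton true))).compl
  · have h2 : {y : V → Bool | Γ.Adj u w → ¬(y u = true ∧ y w = true)} = Set.univ := by
      ext y; simp [hadj]
    rw [h2]; exact MeasurableSet.univ

end Aux

theorem gibbs_measure_fully_supported
    {V : Type*} [Countable V] (Γ : SimpleGraph V)
    -- Γ is locally finite (looplessness is built into `SimpleGraph`):
    (hlf : ∀ v : V, (Γ.neighborSet v).Finite)
    -- λ is a positive activity function:
    (lam : V → ℝ) (hpos : ∀ v, 0 < lam v)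
    -- P is a Gibbs measure for (Γ, λ):
    (P : Measure (V → Bool)) (hP : IsGibbs Γ lam P) :
    ∀ x ∈ indepSets Γ, ∀ U : Finset V, 0 < P (cyl x (U : Set V)) := by
  classical
  intro x hx U
  obtain ⟨hprob, hfull, hcond⟩ := hP
  haveI := hprob
  -- Enlarge U to W = U ∪ N(U)
  set N : Finset V := U.biUnion (fun u => (hlf u).toFinset) with hN
  set W : Finset V := U ∪ N with hW
  have hUW : U ⊆ W := Finset.subset_union_left
  have key := hcond W U hUW x hx
  -- constants
  set s₀ : Finset V := U.filter (fun v => x v = true) with hs0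
  have hs0W : s₀ ⊆ W := (Finset.filter_subset _ _).trans hUW
  set c : ℝ := ∏ v ∈ s₀, lam v with hc_def
  have hc : 0 < c := Finset.prod_pos fun v _ => hpos v
  set B : ℝ := ∑ s ∈ W.powerset, ∏ v ∈ s, lam v with hB_def
  have hB : 0 < B :=
    Finset.sum_pos (fun s _ => Finset.prod_pos fun v _ => hpos v) ⟨∅, Finset.empty_mem_powerset W⟩
  -- pointwise lower bound on the specification for independent boundary conditions
  have hbound : ∀ y ∈ indepSets Γ, c / B ≤ spec Γ lam W y (cyl x (U : Set V)) := by
    intro y hy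
    set pz : V → Bool := patch W s₀ y with hpz
    have hcylmem : pz ∈ cyl x (U : Set V) := by
      intro v hv
      have hvW : v ∈ W := hUW hv
      by_cases hxv : x v = true
      · have : v ∈ s₀ := Finset.mem_filter.mpr ⟨hv, hxv⟩
        simp [hpz, patch, hvW, this, hxv]
      · have hns : v ∉ s₀ := fun h => hxv (Finset.mem_filter.mp h).2
        have : x v = false := by cases h : x v with
          | true => exact absurd h hxv
          | false => rfl
        simp [hpz, patch, hvW, hns, this]
    have hval : ∀ v, pz v = true → v ∈ s₀ ∨ (v ∉ W ∧ y v = true) := by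
      intro v hv
      by_cases hvW : v ∈ W
      · left
        by_contra hns
        simp [hpz, patch, hvW, hns] at hv
      · right
        refine ⟨hvW, ?_⟩
        simpa [hpz, patch, hvW] using hv
    have hindep : pz ∈ indepSets Γ := by
      intro u w hadj huw
      rcases hval u huw.1 with h1 | h1
      · rcases hval w huw.2 with h2 | h2
        · exact hx u w hadj ⟨(Finset.mem_filter.mp h1).2, (Finset.mem_filter.mp h2).2⟩
        · exact h2.1 (Finset.mem_union_right _ (Finset.mem_biUnion.mpr
            ⟨u, (Finset.mem_filter.mp h1).1, (hlf u).mem_toFinset.mpr hadj⟩))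
      · rcases hval w huw.2 with h2 | h2
        · exact h1.1 (Finset.mem_union_right _ (Finset.mem_biUnion.mpr
            ⟨w, (Finset.mem_filter.mp h2).1, (hlf w).mem_toFinset.mpr hadj.symm⟩))
        · exact hy u w hadj ⟨h1.2, h2.2⟩
    -- numerator lower bound
    have hterm : (if pz ∈ indepSets Γ ∧ pz ∈ cyl x (U : Set V) then ∏ v ∈ s₀, lam v else 0)
        = c := by simp [hindep, hcylmem, hc_def]
    have hnn1 : ∀ s ∈ W.powerset, 0 ≤ (if patch W s y ∈ indepSets Γ ∧ patch W s y ∈ cyl x (U : Set V)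
        then ∏ v ∈ s, lam v else 0) := by
      intro s _
      split
      · exact (Finset.prod_pos fun v _ => hpos v).le
      · exact le_rfl
    have hnumge : c ≤ specWt Γ lam W y (cyl x (U : Set V)) := by
      rw [specWt, ← hterm]
      exact Finset.single_le_sum hnn1 (Finset.mem_powerset.mpr hs0W)
    -- denominator bounds
    have hdenge : c ≤ specWt Γ lam W y Set.univ := by
      rw [specWt]
      simp only [Set.mem_univ, and_true]
      have hterm2 : (if pz ∈ indepSets Γ then ∏ v ∈ s₀, lam v else 0) = c := by
        simp [hindep, hc_def]
      rw [← hterm2]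
      have hnn2 : ∀ s ∈ W.powerset,
          0 ≤ (if patch W s y ∈ indepSets Γ then ∏ v ∈ s, lam v else 0) := by
        intro s _
        split
        · exact (Finset.prod_pos fun v _ => hpos v).le
        · exact le_rfl
      exact Finset.single_le_sum (f := fun s =>
        if patch W s y ∈ indepSets Γ then ∏ v ∈ s, lam v else 0) hnn2
        (Finset.mem_powerset.mpr hs0W)
    have hdenle : specWt Γ lam W y Set.univ ≤ B := by
      rw [specWt, hB_def]
      refine Finset.sum_le_sum fun s _ => ?_
      split
      · exact le_refl _
      · exact le_of_lt (Finset.prod_pos fun v _ => hpos v)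
    have hdenpos : 0 < specWt Γ lam W y Set.univ := lt_of_lt_of_le hc hdenge
    rw [spec]
    exact div_le_div₀ (le_trans hc.le hnumge) hnumge hdenpos hdenle
  -- a.e. membership in indepSets
  have hcompl : P (indepSets Γ)ᶜ = 0 := by
    rw [measure_compl (measurableSet_indepSets Γ) (measure_ne_top _ _), hfull, measure_univ,
      tsub_self]
  have hae_mem : ∀ᵐ y ∂P, y ∈ indepSets Γ := by
    rw [MeasureTheory.ae_iff]
    exact hcompl
  have hae : ∀ᵐ y ∂P, c / B ≤ spec Γ lam W y (cyl x (U : Set V)) :=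
    hae_mem.mono fun y hy => hbound y hy
  -- measurable σ-algebra inclusion
  have hm : coordSigma ((W : Set V)ᶜ) ≤ (inferInstance : MeasurableSpace (V → Bool)) := by
    rw [coordSigma, ← measurable_iff_comap_le]
    exact measurable_pi_lambda _ fun v => measurable_pi_apply _
  -- integrability of the specification
  have hint : Integrable (fun y => spec Γ lam W y (cyl x (U : Set V))) P :=
    (integrable_condExp (m := coordSigma ((W : Set V)ᶜ))).congr key
  -- integral identity
  have hII : ∫ y, spec Γ lam W y (cyl x (U : Set V)) ∂P = (P (cyl x (U : Set V))).toReal := by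
    rw [← integral_congr_ae key, integral_condExp hm]
    exact MeasureTheory.integral_indicator_one (measurableSet_cyl x U)
  have hge : c / B ≤ (P (cyl x (U : Set V))).toReal := by
    rw [← hII]
    calc c / B = ∫ _, c / B ∂P := by simp
    _ ≤ _ := integral_mono_ae (integrable_const _) hint hae
  have hpos' : 0 < (P (cyl x (U : Set V))).toReal := lt_of_lt_of_le (div_pos hc hB) hge
  by_contra hle
  push_neg at hle
  have : P (cyl x (U : Set V)) = 0 := le_antisymm hle zero_le
  rw [this] at hpos'
  simp at hpos'
end

section
/- Let Δ be a positive integer, let Γ be a countable, loopless, locally finite graph with maximum degree at most Δ, and let λ: V(Γ) → ℝ_{>0} satisfy λ_- ≤ λ(v) ≤ λ_+ for all v, with 0 < λ_- ≤ λ_+ < ∞. Set C = min{1,λ_-}/(λ_- + (1+λ_+)^Δ) > 0. Then for every finite U ⊆ V(Γ), every x ∈ X(Γ), and every v ∈ U: π^x_U([x_v]) ≥ C. -/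
/-!
STATEMENT 14:
Let `Δ` be a positive integer, let `Γ` be a countable, loopless, locally
finite graph with maximum degree at most `Δ`, and let `λ : V(Γ) → ℝ_{>0}`
satisfy `λ₋ ≤ λ(v) ≤ λ₊` for all `v`, with `0 < λ₋ ≤ λ₊ < ∞`.  Set
`C = min{1, λ₋}/(λ₋ + (1+λ₊)^Δ) > 0`.  Then for every finite `U ⊆ V(Γ)`,
every `x ∈ X(Γ)`, and every `v ∈ U`: `π^x_U([x_v]) ≥ C`.
-/

open scoped Classical

section Aux
variable {V : Type*} {Γ : SimpleGraph V}

lemma isIndep_mono {y z : V → Bool} (h : ∀ u, y u = true → z u = true)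
    (hz : IsIndep Γ z) : IsIndep Γ y :=
  fun u w ha hc => hz u w ha ⟨h u hc.1, h w hc.2⟩

lemma patch_le {U s s' : Finset V} {y : V → Bool} (hss : s ⊆ s') (u : V) :
    patch U s y u = true → patch U s' y u = true := by
  by_cases hU : u ∈ U <;> simp [patch, hU]
  exact fun h => hss h

lemma patch_indep_mono {U s s' : Finset V} {y : V → Bool} (hss : s ⊆ s')
    (h : IsIndep Γ (patch U s' y)) : IsIndep Γ (patch U s y) :=
  isIndep_mono (patch_le hss) h

lemma patch_empty_indep {U : Finset V} {x : V → Bool} (hx : IsIndep Γ x) :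
    IsIndep Γ (patch U ∅ x) := by
  refine isIndep_mono (fun u hu => ?_) hx
  by_cases hU : u ∈ U <;> simp_all [patch]

lemma patch_val {U s : Finset V} {y : V → Bool} {v : V} (hv : v ∈ U) :
    patch U s y v = true ↔ v ∈ s := by simp [patch, hv]

lemma patch_insert_true_of_ne {U r : Finset V} {x : V → Bool} {v u : V}
    (huv : u ≠ v) (h : patch U (insert v r) x u = true) :
    patch U r x u = true := by
  by_cases hU : u ∈ U
  · rw [patch_val hU] at h ⊢
    exact (Finset.mem_insert.1 h).resolve_left huv
  · simpa [patch, hU] using h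

lemma patch_insert_indep {U r : Finset V} {x : V → Bool} {v : V}
    (hv : v ∈ U) (hx : IsIndep Γ x) (hxv : x v = true)
    (hr : ∀ w ∈ r, ¬ Γ.Adj v w)
    (hind : IsIndep Γ (patch U r x)) : IsIndep Γ (patch U (insert v r) x) := by
  intro u w ha hc
  have key : ∀ z : V, z ≠ v → patch U (insert v r) x z = true →
      (z ∈ U → z ∈ r) ∧ (z ∉ U → x z = true) := by
    intro z hz hpz
    constructor
    · intro hzU
      exact ((Finset.mem_insert.1 ((patch_val hzU).1 hpz)).resolve_left hz)
    · intro hzU; simpa [patch, hzU] using hpz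
  by_cases hu : u = v
  · by_cases hw : w = v
    · exact Γ.irrefl (hu ▸ hw ▸ ha)
    · have hk := key w hw hc.2
      by_cases hwU : w ∈ U
      · exact hr w (hk.1 hwU) (hu ▸ ha)
      · exact hx v w (hu ▸ ha) ⟨hxv, hk.2 hwU⟩
  · by_cases hw : w = v
    · have hk := key u hu hc.1
      by_cases huU : u ∈ U
      · exact hr u (hk.1 huU) (hw ▸ ha.symm)
      · exact hx v u (hw ▸ ha.symm) ⟨hxv, hk.2 huU⟩
    · exact hind u w ha
        ⟨patch_insert_true_of_ne hu hc.1, patch_insert_true_of_ne hw hc.2⟩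

lemma sum_powerset_union' {β : Type*} [AddCommMonoid β] [DecidableEq V]
    (t : Finset V) : ∀ (s : Finset V), Disjoint s t → ∀ (f : Finset V → β),
    ∑ u ∈ (s ∪ t).powerset, f u =
      ∑ a ∈ s.powerset, ∑ b ∈ t.powerset, f (a ∪ b) := by
  induction t using Finset.induction_on with
  | empty => intro s _ f; simp
  | @insert x t' hx ih =>
    intro s hd f
    have hxs : x ∉ s := fun h => (Finset.disjoint_left.1 hd h) (Finset.mem_insert_self x t')
    have hd' : Disjoint s t' := hd.mono_right (Finset.subset_insert x t')
    have hxu : x ∉ s ∪ t' := by simp [hxs, hx]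
    rw [Finset.union_insert, Finset.sum_powerset_insert hxu, ih s hd' f,
      ih s hd' (fun u => f (insert x u)), ← Finset.sum_add_distrib]
    refine Finset.sum_congr rfl fun a _ => ?_
    rw [Finset.sum_powerset_insert hx]
    exact congrArg _ (Finset.sum_congr rfl fun b _ => by rw [Finset.union_insert])

end Aux

theorem spec_single_site_lower_bound
    {V : Type*} [Countable V] (Γ : SimpleGraph V) (Δ : ℕ) (hΔ : 0 < Δ)
    -- Γ is locally finite with maximum degree at most Δ:
    (hlf : ∀ v : V, (Γ.neighborSet v).Finite)
    (hdeg : ∀ v : V, (Γ.neighborSet v).ncard ≤ Δ)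
    -- λ takes values in [λ₋, λ₊]:
    (lam : V → ℝ) (lamMinus lamPlus : ℝ)
    (hm : 0 < lamMinus) (hmp : lamMinus ≤ lamPlus)
    (hlb : ∀ v, lamMinus ≤ lam v) (hub : ∀ v, lam v ≤ lamPlus) :
    ∀ (U : Finset V) (x : V → Bool), x ∈ indepSets Γ → ∀ v ∈ U,
      min 1 lamMinus / (lamMinus + (1 + lamPlus) ^ Δ)
        ≤ spec Γ lam U x {y | y v = x v} := by
  intro U x hx v hv
  set c : ℝ := min 1 lamMinus with hc_def
  set d : ℝ := lamMinus + (1 + lamPlus) ^ Δ with hd_def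
  have hlam : ∀ u, 0 < lam u := fun u => lt_of_lt_of_le hm (hlb u)
  have hpnn : ∀ t : Finset V, (0:ℝ) ≤ ∏ u ∈ t, lam u :=
    fun t => Finset.prod_nonneg fun u _ => (hlam u).le
  have h1p : (1:ℝ) ≤ 1 + lamPlus := by linarith [hm.trans_le hmp]
  have hpow1 : (1:ℝ) + lamPlus ≤ (1 + lamPlus) ^ Δ := by
    calc (1:ℝ) + lamPlus = (1 + lamPlus) ^ 1 := (pow_one _).symm
    _ ≤ (1 + lamPlus) ^ Δ := pow_le_pow_right₀ h1p hΔ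
  have hd_pos : 0 < d := by
    have : (0:ℝ) < (1 + lamPlus) ^ Δ := by positivity
    simp only [hd_def]; linarith
  have hc0 : 0 ≤ c := le_min zero_le_one hm.le
  have hc1 : c ≤ 1 := min_le_left _ _
  have hcm : c ≤ lamMinus := min_le_right _ _
  set A : Set (V → Bool) := {y | y v = x v} with hA_def
  set G : Finset V → ℝ :=
    fun t => if patch U t x ∈ indepSets Γ then ∏ u ∈ t, lam u else 0 with hG_def
  set F : Finset V → ℝ :=
    fun t => if patch U t x ∈ indepSets Γ ∧ patch U t x ∈ A then ∏ u ∈ t, lam u else 0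
    with hF_def
  have hG0 : ∀ t, 0 ≤ G t := by
    intro t; simp only [hG_def]; split
    · exact hpnn t
    · exact le_refl 0
  have hF0 : ∀ t, 0 ≤ F t := by
    intro t; simp only [hF_def]; split
    · exact hpnn t
    · exact le_refl 0
  set U' : Finset V := U.erase v with hU'_def
  have hvU' : v ∉ U' := Finset.notMem_erase v U
  have hsplit : ∀ f : Finset V → ℝ, ∑ s ∈ U.powerset, f s =
      ∑ t ∈ U'.powerset, f t + ∑ t ∈ U'.powerset, f (insert v t) := by
    intro f
    rw [show U.powerset = (insert v U').powerset by rw [Finset.insert_erase hv]]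
    exact Finset.sum_powerset_insert hvU' f
  have hWdef : specWt Γ lam U x A =
      ∑ t ∈ U'.powerset, F t + ∑ t ∈ U'.powerset, F (insert v t) := by
    have h : specWt Γ lam U x A = ∑ s ∈ U.powerset, F s :=
      Finset.sum_congr rfl fun s _ => by simp [hF_def]
    rw [h]; exact hsplit F
  have hZdef : specWt Γ lam U x Set.univ =
      ∑ t ∈ U'.powerset, G t + ∑ t ∈ U'.powerset, G (insert v t) := by
    have : specWt Γ lam U x Set.univ = ∑ s ∈ U.powerset, G s := by
      refine Finset.sum_congr rfl fun s _ => ?_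
      simp [hG_def]
    rw [this]; exact hsplit G
  have pv_false : ∀ t : Finset V, v ∉ t → patch U t x v = false := by
    intro t ht; simp [patch, hv, ht]
  have pv_true : ∀ t : Finset V, patch U (insert v t) x v = true :=
    fun t => (patch_val hv).2 (Finset.mem_insert_self v t)
  have hvnot : ∀ t ∈ U'.powerset, v ∉ t :=
    fun t ht hvt => hvU' (Finset.mem_powerset.1 ht hvt)
  -- nonnegativity of each partial sum
  have hS_nn : ∀ f : Finset V → ℝ, (∀ t, 0 ≤ f t) → (0:ℝ) ≤ ∑ t ∈ U'.powerset, f t :=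
    fun f hf => Finset.sum_nonneg fun t _ => hf t
  cases hxv : x v with
  | false =>
    have hFt : ∀ t ∈ U'.powerset, F t = G t := by
      intro t ht
      have : patch U t x ∈ A := by
        simp only [hA_def, Set.mem_setOf_eq, hxv, pv_false t (hvnot t ht)]
      simp [hF_def, hG_def, this, indepSets]; congr
    have hFins : ∀ t ∈ U'.powerset, F (insert v t) = 0 := by
      intro t _
      have : patch U (insert v t) x ∉ A := by
        simp [hA_def, hxv, pv_true t]
      simp [hF_def, this]
    set S0 := ∑ t ∈ U'.powerset, G t with hS0_def
    set S1 := ∑ t ∈ U'.powerset, G (insert v t) with hS1_def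
    have hW : specWt Γ lam U x A = S0 := by
      rw [hWdef, Finset.sum_congr rfl hFt, Finset.sum_congr rfl hFins]
      simp; rfl
    have hS0_1 : (1:ℝ) ≤ S0 := by
      have hmem : (∅ : Finset V) ∈ U'.powerset :=
        Finset.mem_powerset.2 (Finset.empty_subset _)
      have hGe : G ∅ = 1 := by
        have h : patch U ∅ x ∈ indepSets Γ := patch_empty_indep hx
        simp [hG_def, h]
      calc (1:ℝ) = G ∅ := hGe.symm
      _ ≤ S0 := Finset.single_le_sum (fun t _ => hG0 t) hmem
    have hS1le : S1 ≤ lamPlus * S0 := by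
      rw [hS0_def, Finset.mul_sum]
      refine Finset.sum_le_sum fun t ht => ?_
      by_cases hi : patch U (insert v t) x ∈ indepSets Γ
      · have hti : patch U t x ∈ indepSets Γ :=
          patch_indep_mono (Finset.subset_insert v t) hi
        have hvt : v ∉ t := hvnot t ht
        simp only [hG_def, if_pos hi, if_pos hti, Finset.prod_insert hvt]
        exact mul_le_mul_of_nonneg_right (hub v) (hpnn t)
      · simp only [hG_def, if_neg hi]
        exact mul_nonneg ((hm.trans_le hmp).le) (hG0 t)
    have hS1nn : 0 ≤ S1 := hS_nn _ (fun t => hG0 _)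
    have hS0nn : (0:ℝ) ≤ S0 := le_trans zero_le_one hS0_1
    have hZ_pos : 0 < specWt Γ lam U x Set.univ := by rw [hZdef]; linarith
    rw [spec, hW, div_le_div_iff₀ hd_pos hZ_pos, hZdef]
    have h1 : c * S0 ≤ 1 * S0 := mul_le_mul_of_nonneg_right hc1 hS0nn
    have h2 : c * S1 ≤ 1 * S1 := mul_le_mul_of_nonneg_right hc1 hS1nn
    have h3 : (1 + lamPlus) * S0 ≤ (1 + lamPlus) ^ Δ * S0 :=
      mul_le_mul_of_nonneg_right hpow1 hS0nn
    have h4 : 0 ≤ lamMinus * S0 := mul_nonneg hm.le hS0nn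
    simp only [hd_def]
    nlinarith [hS1le]
  | true =>
    have hFt : ∀ t ∈ U'.powerset, F t = 0 := by
      intro t ht
      have : patch U t x ∉ A := by
        simp [hA_def, hxv, pv_false t (hvnot t ht)]
      simp [hF_def, this]
    have hFins : ∀ t ∈ U'.powerset, F (insert v t) = G (insert v t) := by
      intro t _
      have : patch U (insert v t) x ∈ A := by
        simp only [hA_def, Set.mem_setOf_eq, hxv, pv_true t]
      simp [hF_def, hG_def, this, indepSets]; congr
    set S0 := ∑ t ∈ U'.powerset, G t with hS0_def
    set S1 := ∑ t ∈ U'.powerset, G (insert v t) with hS1_def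
    have hW : specWt Γ lam U x A = S1 := by
      rw [hWdef, Finset.sum_congr rfl hFt, Finset.sum_congr rfl hFins]
      simp; rfl
    have hS1low : lamMinus ≤ S1 := by
      have hmem : (∅ : Finset V) ∈ U'.powerset :=
        Finset.mem_powerset.2 (Finset.empty_subset _)
      have hins : patch U (insert v (∅ : Finset V)) x ∈ indepSets Γ :=
        patch_insert_indep hv hx hxv (by simp) (patch_empty_indep hx)
      have hGe : G (insert v ∅) = lam v := by
        simp only [hG_def]
        rw [if_pos hins]
        simp
      calc lamMinus ≤ lam v := hlb v
      _ = G (insert v ∅) := hGe.symm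
      _ ≤ S1 := Finset.single_le_sum (fun t _ => hG0 _) hmem
    -- main estimate
    set N : Finset V := U'.filter (fun u => Γ.Adj v u) with hN_def
    have hNU' : N ⊆ U' := Finset.filter_subset _ _
    have hRN : (U' \ N) ∪ N = U' := Finset.sdiff_union_of_subset hNU'
    have hdisj : Disjoint (U' \ N) N := Finset.sdiff_disjoint
    have hNcard : N.card ≤ Δ := by
      have h1 : N ⊆ (hlf v).toFinset := by
        intro u hu
        simp only [Set.Finite.mem_toFinset, SimpleGraph.mem_neighborSet]
        exact (Finset.mem_filter.1 hu).2
      calc N.card ≤ (hlf v).toFinset.card := Finset.card_le_card h1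
      _ = (Γ.neighborSet v).ncard := (Set.ncard_eq_toFinset_card _ (hlf v)).symm
      _ ≤ Δ := hdeg v
    have hprodN : ∑ q ∈ N.powerset, ∏ u ∈ q, lam u ≤ (1 + lamPlus) ^ Δ := by
      have h1 : ∑ q ∈ N.powerset, ∏ u ∈ q, lam u = ∏ u ∈ N, (lam u + 1) := by
        rw [Finset.prod_add]
        exact (Finset.sum_congr rfl fun q _ => by simp).symm
      rw [h1]
      calc ∏ u ∈ N, (lam u + 1) ≤ ∏ _u ∈ N, (1 + lamPlus) := by
            refine Finset.prod_le_prod (fun u _ => by linarith [hlam u]) (fun u _ => ?_)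
            linarith [hub u]
      _ = (1 + lamPlus) ^ N.card := Finset.prod_const _
      _ ≤ (1 + lamPlus) ^ Δ := pow_le_pow_right₀ h1p hNcard
    have hmain : lamMinus * S0 ≤ (1 + lamPlus) ^ Δ * S1 := by
      have hS0eq : S0 = ∑ r ∈ (U' \ N).powerset, ∑ q ∈ N.powerset, G (r ∪ q) := by
        rw [hS0_def, show U'.powerset = ((U' \ N) ∪ N).powerset by rw [hRN]]
        exact sum_powerset_union' N (U' \ N) hdisj G
      have step1 : ∀ r ∈ (U' \ N).powerset,
          lamMinus * ∑ q ∈ N.powerset, G (r ∪ q) ≤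
            (1 + lamPlus) ^ Δ * G (insert v r) := by
        intro r hr
        have hrsub : r ⊆ U' \ N := Finset.mem_powerset.1 hr
        have hvr : v ∉ r := fun h => hvU' (Finset.mem_sdiff.1 (hrsub h)).1
        have hradj : ∀ w ∈ r, ¬ Γ.Adj v w := by
          intro w hw hadj
          have hmem := hrsub hw
          exact (Finset.mem_sdiff.1 hmem).2
            (Finset.mem_filter.2 ⟨(Finset.mem_sdiff.1 hmem).1, hadj⟩)
        have key : ∀ q ∈ N.powerset,
            lamMinus * G (r ∪ q) ≤ (∏ u ∈ q, lam u) * G (insert v r) := by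
          intro q hq
          by_cases hi : patch U (r ∪ q) x ∈ indepSets Γ
          · have hri : patch U r x ∈ indepSets Γ :=
              patch_indep_mono Finset.subset_union_left hi
            have hins : patch U (insert v r) x ∈ indepSets Γ :=
              patch_insert_indep hv hx hxv hradj hri
            have hdrq : Disjoint r q :=
              hdisj.mono hrsub (Finset.mem_powerset.1 hq)
            simp only [hG_def, if_pos hi, if_pos hins, Finset.prod_union hdrq,
              Finset.prod_insert hvr]
            have h1 : lamMinus * ∏ u ∈ r, lam u ≤ lam v * ∏ u ∈ r, lam u :=
              mul_le_mul_of_nonneg_right (hlb v) (hpnn r)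
            have h2 : (∏ u ∈ q, lam u) * (lamMinus * ∏ u ∈ r, lam u) ≤
                (∏ u ∈ q, lam u) * (lam v * ∏ u ∈ r, lam u) :=
              mul_le_mul_of_nonneg_left h1 (hpnn q)
            nlinarith [h2]
          · simp only [hG_def, if_neg hi, mul_zero]
            exact mul_nonneg (hpnn q) (hG0 _)
        calc lamMinus * ∑ q ∈ N.powerset, G (r ∪ q)
            = ∑ q ∈ N.powerset, lamMinus * G (r ∪ q) := Finset.mul_sum _ _ _
        _ ≤ ∑ q ∈ N.powerset, (∏ u ∈ q, lam u) * G (insert v r) :=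
            Finset.sum_le_sum key
        _ = (∑ q ∈ N.powerset, ∏ u ∈ q, lam u) * G (insert v r) :=
            (Finset.sum_mul _ _ _).symm
        _ ≤ (1 + lamPlus) ^ Δ * G (insert v r) :=
            mul_le_mul_of_nonneg_right hprodN (hG0 _)
      calc lamMinus * S0
          = ∑ r ∈ (U' \ N).powerset, lamMinus * ∑ q ∈ N.powerset, G (r ∪ q) := by
            rw [hS0eq, Finset.mul_sum]
      _ ≤ ∑ r ∈ (U' \ N).powerset, (1 + lamPlus) ^ Δ * G (insert v r) :=
            Finset.sum_le_sum step1
      _ = (1 + lamPlus) ^ Δ * ∑ r ∈ (U' \ N).powerset, G (insert v r) := by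
            rw [Finset.mul_sum]
      _ ≤ (1 + lamPlus) ^ Δ * S1 := by
            refine mul_le_mul_of_nonneg_left ?_ (by positivity)
            refine Finset.sum_le_sum_of_subset_of_nonneg ?_ (fun t _ _ => hG0 _)
            exact Finset.powerset_mono.2 (Finset.sdiff_subset)
    have hS0nn : 0 ≤ S0 := hS_nn _ (fun t => hG0 _)
    have hS1nn : (0:ℝ) ≤ S1 := le_trans hm.le hS1low
    have hZ_pos : 0 < specWt Γ lam U x Set.univ := by rw [hZdef]; linarith
    rw [spec, hW, div_le_div_iff₀ hd_pos hZ_pos, hZdef]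
    have h1 : c * S0 ≤ lamMinus * S0 := mul_le_mul_of_nonneg_right hcm hS0nn
    have h2 : c * S1 ≤ lamMinus * S1 := mul_le_mul_of_nonneg_right hcm hS1nn
    simp only [hd_def]
    nlinarith [hmain]
end
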